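/- Let M be an m×m real matrix satisfying the conditions of the paper's Markov framework (upper triangular, diagonal entries in [0,1), rows except the last summing to 1, last row zero, and the column-independent ratio property), let A = I − M, let δ_j = −A(j−1,j)/(A(j−1,j−1)·A(j,j)), and let p be a probability distribution row vector on {0,…,m−1}. Then p·A^{-1}·A^{-1}·M·e_{m−1} = ∑_{i=0}^{m−2} p(i)·(1/A(i,i) + ∑_{j=i+1}^{m−2} δ_j), where e_{m−1} = (0,…,0,1)^T. -/

import Mathlib

/-- The value `δ_j = −A(j−1,j)/(A(j−1,j−1)·A(j,j))` where `A = I − M`. -/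
noncomputable def delta {m : ℕ} (M : Matrix (Fin m) (Fin m) ℝ) (j : Fin m) : ℝ :=
  -(1 - M) ⟨(j : ℕ) - 1, lt_of_le_of_lt (Nat.sub_le _ _) j.isLt⟩ j /
    ((1 - M) ⟨(j : ℕ) - 1, lt_of_le_of_lt (Nat.sub_le _ _) j.isLt⟩
        ⟨(j : ℕ) - 1, lt_of_le_of_lt (Nat.sub_le _ _) j.isLt⟩ *
      (1 - M) j j)

namespace BacoAux

variable {m : ℕ} (M : Matrix (Fin m) (Fin m) ℝ)

/-- The candidate inverse of `A = 1 - M`. -/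
noncomputable def B : Matrix (Fin m) (Fin m) ℝ :=
  fun i j => if (i : ℕ) < (j : ℕ) then delta M j
    else if i = j then (1 - M i i)⁻¹ else 0

lemma A_apply (i j : Fin m) : (1 - M) i j = (if i = j then 1 else 0) - M i j := by
  simp [Matrix.sub_apply, Matrix.one_apply]

/-- Tail sum of row `i` from column `j` on. -/
noncomputable def T (i j : Fin m) : ℝ :=
  ∑ k ∈ Finset.univ.filter (fun k : Fin m => (j : ℕ) ≤ (k : ℕ)), M i k

section hyps

variable (hut : ∀ i j : Fin m, j < i → M i j = 0)
  (hdiag : ∀ i : Fin m, 0 ≤ M i i ∧ M i i < 1)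
  (hrow : ∀ i : Fin m, (i : ℕ) ≠ m - 1 → ∑ j, M i j = 1)

include hut hrow in
lemma rowtail (j : Fin m) (hj : 1 ≤ (j : ℕ)) :
    T M ⟨(j : ℕ) - 1, by omega⟩ j
      = 1 - M ⟨(j : ℕ) - 1, by omega⟩ ⟨(j : ℕ) - 1, by omega⟩ := by
  have hjm : (j : ℕ) < m := j.isLt
  set j' : Fin m := ⟨(j : ℕ) - 1, by omega⟩ with hj'
  have hj'v : (j' : ℕ) = (j : ℕ) - 1 := rfl
  have hr := hrow j' (by omega)
  have hsp := Finset.sum_filter_add_sum_filter_not Finset.univ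
    (fun k : Fin m => (j : ℕ) ≤ (k : ℕ)) (fun k => M j' k)
  have h2 : ∑ k ∈ Finset.univ.filter (fun k : Fin m => ¬ (j : ℕ) ≤ (k : ℕ)), M j' k
      = M j' j' := by
    apply Finset.sum_eq_single_of_mem j'
    · simp only [Finset.mem_filter, Finset.mem_univ, true_and, not_le]; omega
    · intro k hk hne
      simp only [Finset.mem_filter, Finset.mem_univ, true_and, not_le] at hk
      apply hut
      rw [Fin.lt_def]
      have : (k : ℕ) ≠ (j' : ℕ) := fun h => hne (Fin.ext h)
      omega
  rw [h2] at hsp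
  rw [hr] at hsp
  unfold T
  linarith

variable (φ : Fin m → ℝ)
  (hratio : ∀ i j : Fin m, ∀ h : (i : ℕ) + 1 < (j : ℕ),
    M ⟨(i : ℕ) + 1, Nat.lt_trans h j.isLt⟩ j ≠ 0 ∧
      M i j / M ⟨(i : ℕ) + 1, Nat.lt_trans h j.isLt⟩ j = φ i)

include hut hrow hratio in
lemma tail (j : Fin m) :
    ∀ i : Fin m, (i : ℕ) < (j : ℕ) →
      T M i j * M ⟨(j : ℕ) - 1, by omega⟩ j
        = M i j * (1 - M ⟨(j : ℕ) - 1, by omega⟩ ⟨(j : ℕ) - 1, by omega⟩) := by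
  have hjm : (j : ℕ) < m := j.isLt
  set j' : Fin m := ⟨(j : ℕ) - 1, by omega⟩ with hj'
  have hj'v : (j' : ℕ) = (j : ℕ) - 1 := rfl
  suffices h : ∀ d : ℕ, ∀ i : Fin m, (i : ℕ) < (j : ℕ) → (j : ℕ) - 1 - (i : ℕ) = d →
      T M i j * M j' j = M i j * (1 - M j' j') by
    intro i hi
    exact h ((j : ℕ) - 1 - (i : ℕ)) i hi rfl
  intro d
  induction d with
  | zero =>
    intro i hi hd
    have : i = j' := Fin.ext (by omega)
    rw [this, rowtail M hut hrow j (by omega)]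
    ring
  | succ d ih =>
    intro i hi hd
    have hi1m : (i : ℕ) + 1 < m := by omega
    set i1 : Fin m := ⟨(i : ℕ) + 1, hi1m⟩ with hi1
    have hi1v : (i1 : ℕ) = (i : ℕ) + 1 := rfl
    have hi1j : (i1 : ℕ) < (j : ℕ) := by omega
    have key : ∀ k : Fin m, (j : ℕ) ≤ (k : ℕ) → M i k = φ i * M i1 k := by
      intro k hk
      obtain ⟨hne, hdiv⟩ := hratio i k (by omega)
      rw [div_eq_iff hne] at hdiv
      rw [hdiv]
    have hT : T M i j = φ i * T M i1 j := by
      unfold T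
      rw [Finset.mul_sum]
      apply Finset.sum_congr rfl
      intro k hk
      simp only [Finset.mem_filter, Finset.mem_univ, true_and] at hk
      exact key k hk
    have hM : M i j = φ i * M i1 j := key j le_rfl
    have hih := ih i1 hi1j (by omega)
    rw [hT, hM]
    linear_combination φ i * hih

include hut hdiag hrow hratio in
lemma mul_B : (1 - M) * B M = 1 := by
  ext i j
  rw [Matrix.mul_apply, Matrix.one_apply]
  rcases lt_trichotomy (i : ℕ) (j : ℕ) with hij | hij | hij
  · -- i < j
    have hne : i ≠ j := fun h => by rw [h] at hij; omega
    rw [if_neg hne]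
    have hj1 : 1 ≤ (j : ℕ) := by omega
    set j' : Fin m := ⟨(j : ℕ) - 1, by omega⟩ with hj'
    have hj'v : (j' : ℕ) = (j : ℕ) - 1 := rfl
    have hsplit : ∀ k : Fin m, (1 - M) i k * B M k j
        = (if (k : ℕ) < (j : ℕ) then (1 - M) i k else 0) * delta M j
          + (if k = j then (1 - M) i j * (1 - M j j)⁻¹ else 0) := by
      intro k
      by_cases h1 : (k : ℕ) < (j : ℕ)
      · have hkj : k ≠ j := fun h => by rw [h] at h1; omega
        rw [if_pos h1, if_neg hkj]
        simp only [B, if_pos h1]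
        ring
      · by_cases h2 : k = j
        · subst h2
          rw [if_neg h1, if_pos rfl]
          simp [B, h1]
        · have : (j : ℕ) < (k : ℕ) := by
            have : (k : ℕ) ≠ (j : ℕ) := fun h => h2 (Fin.ext h)
            omega
          rw [if_neg h1, if_neg h2]
          simp only [B, if_neg (by omega : ¬ (k : ℕ) < (j : ℕ)), if_neg h2]
          ring
    rw [Finset.sum_congr rfl (fun k _ => hsplit k), Finset.sum_add_distrib]
    rw [Finset.sum_ite_eq' Finset.univ j
      (fun _ => (1 - M) i j * (1 - M j j)⁻¹), if_pos (Finset.mem_univ j)]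
    rw [← Finset.sum_mul, ← Finset.sum_filter]
    -- compute the filtered sum = T M i j
    have hsum : ∑ k ∈ Finset.univ.filter (fun k : Fin m => (k : ℕ) < (j : ℕ)),
        (1 - M) i k = T M i j := by
      have hr := hrow i (by omega)
      have htot : ∑ k : Fin m, (1 - M) i k = 0 := by
        simp only [A_apply, Finset.sum_sub_distrib, Finset.sum_ite_eq Finset.univ i
          (fun _ => (1 : ℝ)), if_pos (Finset.mem_univ i), hr]
        ring
      have hsp := Finset.sum_filter_add_sum_filter_not Finset.univ
        (fun k : Fin m => (k : ℕ) < (j : ℕ)) (fun k => (1 - M) i k)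
      have hge : ∑ k ∈ Finset.univ.filter (fun k : Fin m => ¬ (k : ℕ) < (j : ℕ)),
          (1 - M) i k = - T M i j := by
        unfold T
        rw [← Finset.sum_neg_distrib]
        apply Finset.sum_congr (by ext k; simp [not_lt])
        intro k hk
        simp only [Finset.mem_filter, Finset.mem_univ, true_and] at hk
        have : i ≠ k := fun h => by rw [← h] at hk; omega
        rw [A_apply, if_neg this]
        ring
      rw [hge] at hsp
      rw [htot] at hsp
      linarith
    rw [hsum]
    -- now arithmetic with tail
    have htail := tail M hut hrow φ hratio j i hij
    have ha : (1 - M j' j') ≠ 0 := by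
      have := (hdiag j').2
      intro h; linarith
    have hb : (1 - M j j) ≠ 0 := by
      have := (hdiag j).2
      intro h; linarith
    have hAij : (1 - M) i j = - M i j := by rw [A_apply, if_neg hne]; ring
    have hdelta : delta M j = M j' j / ((1 - M j' j') * (1 - M j j)) := by
      unfold delta
      have hj'ne : (⟨(j : ℕ) - 1, lt_of_le_of_lt (Nat.sub_le _ _) j.isLt⟩ : Fin m) ≠ j := by
        intro h
        have := congrArg Fin.val h
        simp at this
        omega
      rw [A_apply, A_apply, A_apply, if_neg hj'ne, if_pos rfl, if_pos rfl]
      simp [hj']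
    rw [hdelta, hAij]
    field_simp
    rw [← hj'] at htail
    linear_combination htail
  · -- i = j
    have : i = j := Fin.ext hij
    subst this
    rw [if_pos rfl]
    have h1 : ∀ k ∈ Finset.univ, k ≠ i → (1 - M) i k * B M k i = 0 := by
      intro k _ hne
      have hkne : (k : ℕ) ≠ (i : ℕ) := fun h => hne (Fin.ext h)
      rcases lt_or_gt_of_ne hkne with h | h
      · rw [A_apply, if_neg (fun hh => hne hh.symm), hut i k (by rwa [Fin.lt_def])]
        ring
      · simp only [B, if_neg (by omega : ¬ (k : ℕ) < (i : ℕ)), if_neg hne]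
        ring
    rw [Finset.sum_eq_single i h1 (fun h => absurd (Finset.mem_univ i) h)]
    have hB : B M i i = (1 - M i i)⁻¹ := by simp [B]
    rw [hB, A_apply, if_pos rfl]
    exact mul_inv_cancel₀ (by have := (hdiag i).2; intro h; linarith)
  · -- j < i
    have hne : i ≠ j := fun h => by rw [h] at hij; omega
    rw [if_neg hne]
    apply Finset.sum_eq_zero
    intro k _
    by_cases h1 : (k : ℕ) < (i : ℕ)
    · rw [A_apply M i k, if_neg (fun h => by rw [h] at h1; omega)]
      rw [hut i k (by rwa [Fin.lt_def])]
      ring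
    · have hkj : ¬ (k : ℕ) < (j : ℕ) := by omega
      have hkj2 : k ≠ j := fun h => by rw [h] at h1; omega
      simp only [B, if_neg hkj, if_neg hkj2]
      ring

include hut hdiag hrow in
lemma delta_last (hm2 : 2 ≤ m) (hlast : ∀ j : Fin m, M ⟨m - 1, by omega⟩ j = 0) :
    delta M ⟨m - 1, by omega⟩ = 1 := by
  set jl : Fin m := ⟨m - 1, by omega⟩ with hjl
  have hjlv : (jl : ℕ) = m - 1 := rfl
  have h1 := rowtail M hut hrow jl (by omega)
  have h2 : T M ⟨(jl : ℕ) - 1, by omega⟩ jl = M ⟨(jl : ℕ) - 1, by omega⟩ jl := by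
    unfold T
    apply Finset.sum_eq_single_of_mem jl
    · simp only [Finset.mem_filter, Finset.mem_univ, true_and]
      omega
    · intro k hk hne
      simp only [Finset.mem_filter, Finset.mem_univ, true_and] at hk
      have hkm := k.isLt
      exact absurd (Fin.ext (by omega : (k : ℕ) = (jl : ℕ))) hne
  have key : M ⟨(jl : ℕ) - 1, by omega⟩ jl
      = 1 - M ⟨(jl : ℕ) - 1, by omega⟩ ⟨(jl : ℕ) - 1, by omega⟩ := by
    rw [← h1, h2]
  have hnej : (⟨(jl : ℕ) - 1, lt_of_le_of_lt (Nat.sub_le _ _) jl.isLt⟩ : Fin m) ≠ jl := by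
    intro h
    have := congrArg Fin.val h
    simp only [Fin.val_mk] at this
    omega
  unfold delta
  rw [A_apply, A_apply, A_apply, if_neg hnej, if_pos rfl, if_pos rfl]
  rw [show M jl jl = 0 from hlast jl, key]
  have hd := (hdiag (⟨(jl : ℕ) - 1, by omega⟩ : Fin m)).2
  have hne0 : (1 : ℝ) - M ⟨(jl : ℕ) - 1, by omega⟩ ⟨(jl : ℕ) - 1, by omega⟩ ≠ 0 := by
    intro h; linarith
  field_simp
  ring

include hut hdiag hrow in
lemma B_last (hm : 0 < m) (hlast : ∀ j : Fin m, M ⟨m - 1, Nat.sub_lt hm Nat.one_pos⟩ j = 0) (k : Fin m) :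
    B M k ⟨m - 1, Nat.sub_lt hm Nat.one_pos⟩ = 1 := by
  by_cases h : (k : ℕ) < m - 1
  · have : (k : ℕ) < ((⟨m - 1, Nat.sub_lt hm Nat.one_pos⟩ : Fin m) : ℕ) := h
    simp only [B, if_pos this]
    exact delta_last M hut hdiag hrow (by omega) hlast
  · have hk : k = ⟨m - 1, Nat.sub_lt hm Nat.one_pos⟩ := Fin.ext (by have := k.isLt; simp; omega)
    rw [hk]
    simp [B, hlast]

end hyps
end BacoAux

theorem expected_optimization_time_explicit (m : ℕ) (hm : 0 < m)
    (M : Matrix (Fin m) (Fin m) ℝ)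
    (hut : ∀ i j : Fin m, j < i → M i j = 0)
    (hdiag : ∀ i : Fin m, 0 ≤ M i i ∧ M i i < 1)
    (hrow : ∀ i : Fin m, (i : ℕ) ≠ m - 1 → ∑ j, M i j = 1)
    (hlast : ∀ j : Fin m, M ⟨m - 1, by omega⟩ j = 0)
    (φ : Fin m → ℝ)
    (hratio : ∀ i j : Fin m, ∀ h : (i : ℕ) + 1 < (j : ℕ),
      M ⟨(i : ℕ) + 1, Nat.lt_trans h j.isLt⟩ j ≠ 0 ∧
        M i j / M ⟨(i : ℕ) + 1, Nat.lt_trans h j.isLt⟩ j = φ i)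
    (p : Fin m → ℝ) (hp : ∀ i, 0 ≤ p i) (hpsum : ∑ i, p i = 1) :
    ∑ i : Fin m, p i * (((1 - M)⁻¹ * (1 - M)⁻¹ * M) i ⟨m - 1, by omega⟩) =
      ∑ i : Fin m,
        (if (i : ℕ) < m - 1 then
          p i * (1 / (1 - M) i i +
            ∑ j : Fin m, (if (i : ℕ) < (j : ℕ) ∧ (j : ℕ) < m - 1 then delta M j else 0))
        else 0) := by
  classical
  have hAB := BacoAux.mul_B M hut hdiag hrow φ hratio
  have hAinv : (1 - M)⁻¹ = BacoAux.B M := Matrix.inv_eq_right_inv hAB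
  rw [hAinv]
  set Bm := BacoAux.B M with hBm
  set L : Fin m := ⟨m - 1, by omega⟩ with hL
  have hLv : (L : ℕ) = m - 1 := rfl
  have hBA : Bm * (1 - M) = 1 := mul_eq_one_comm.mp hAB
  have hBBM : Bm * Bm * M = Bm * Bm - Bm := by
    calc Bm * Bm * M = Bm * Bm * (1 - (1 - M)) := by rw [sub_sub_cancel]
    _ = Bm * Bm - Bm * (Bm * (1 - M)) := by rw [mul_sub, mul_one, mul_assoc]
    _ = Bm * Bm - Bm := by rw [hBA, mul_one]
  rw [hBBM]
  have hBlast : ∀ k : Fin m, Bm k L = 1 := fun k =>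
    BacoAux.B_last M hut hdiag hrow hm hlast k
  apply Finset.sum_congr rfl
  intro i _
  have him := i.isLt
  by_cases hi : (i : ℕ) < m - 1
  · rw [if_pos hi]
    have hentry : (Bm * Bm - Bm) i L = (∑ k, Bm i k) - 1 := by
      rw [Matrix.sub_apply, Matrix.mul_apply, hBlast i]
      congr 1
      exact Finset.sum_congr rfl fun k _ => by rw [hBlast k, mul_one]
    rw [hentry]
    have hAii : (1 - M) i i = 1 - M i i := by rw [BacoAux.A_apply, if_pos rfl]
    have hpt : ∀ k : Fin m, Bm i k
        = (if k = i then (1 - M i i)⁻¹ else 0)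
          + (if (i : ℕ) < (k : ℕ) ∧ (k : ℕ) < m - 1 then delta M k else 0)
          + (if k = L then 1 else 0) := by
      intro k
      have hkm := k.isLt
      by_cases h1 : (i : ℕ) < (k : ℕ)
      · have hki : k ≠ i := fun h => absurd (congrArg Fin.val h) (by omega)
        by_cases h2 : (k : ℕ) < m - 1
        · have hkL : k ≠ L := fun h => absurd (congrArg Fin.val h) (by omega)
          rw [if_neg hki, if_pos ⟨h1, h2⟩, if_neg hkL]
          simp only [hBm, BacoAux.B, if_pos h1]
          ring
        · have hkL : k = L := Fin.ext (by omega)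
          rw [hkL, hBlast i, if_neg (fun h => hki (hkL ▸ h : k = i)),
            if_neg (fun h => h2 (hkL ▸ h.2)), if_pos rfl]
          norm_num
      · by_cases h2 : k = i
        · rw [h2, if_pos rfl, if_neg (by omega : ¬((i : ℕ) < (i : ℕ) ∧ (i : ℕ) < m - 1)),
            if_neg (fun h => absurd (congrArg Fin.val h) (by omega))]
          simp [hBm, BacoAux.B]
        · have hkv : (k : ℕ) ≠ (i : ℕ) := fun h => h2 (Fin.ext h)
          have hkL : k ≠ L := fun h => absurd (congrArg Fin.val h) (by omega)
          rw [if_neg h2, if_neg (by omega : ¬((i : ℕ) < (k : ℕ) ∧ (k : ℕ) < m - 1)),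
            if_neg hkL]
          simp only [hBm, BacoAux.B, if_neg h1,
            if_neg (show ¬ i = k from fun h => h2 h.symm)]
          ring
    rw [Finset.sum_congr rfl fun k _ => hpt k, Finset.sum_add_distrib,
      Finset.sum_add_distrib,
      Finset.sum_ite_eq' Finset.univ i (fun _ => (1 - M i i)⁻¹),
      Finset.sum_ite_eq' Finset.univ L (fun _ => (1 : ℝ)),
      if_pos (Finset.mem_univ i), if_pos (Finset.mem_univ L), hAii, one_div]
    ring
  · rw [if_neg hi]
    have hiL : i = L := Fin.ext (by omega)
    have hzero : (Bm * Bm - Bm) i L = 0 := by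
      rw [hiL, Matrix.sub_apply, Matrix.mul_apply]
      have hBLL : Bm L L = 1 := hBlast L
      rw [Finset.sum_eq_single L (fun k _ hk => ?_) (fun h => absurd (Finset.mem_univ L) h)]
      · rw [hBLL]; ring
      · rw [hBlast k, mul_one]
        have hkv : (k : ℕ) ≠ (L : ℕ) := fun h => hk (Fin.ext h)
        have hkm := k.isLt
        have hnlt : ¬ (L : ℕ) < (k : ℕ) := by omega
        simp only [hBm, BacoAux.B, if_neg hnlt,
          if_neg (show ¬ L = k from fun h => hk h.symm)]
    rw [hzero, mul_zero]
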